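/- Barnum's proposed coherent-information rate-distortion function can be negative: let π = I₂/2 be the maximally mixed qubit state with purification the Bell state |Φ⟩ = (|00⟩+|11⟩)/√2, and let Λ be the completely depolarizing qubit channel Λ(X) = Tr[X]·I₂/2. Then the output state ω = (id ⊗ Λ)(|Φ⟩⟨Φ|) is the two-qubit maximally mixed state I₄/4, the distortion is d(π,Λ) = 1 − ⟨Φ|ω|Φ⟩ = 3/4, and the coherent information is I(A⟩B)_ω = −1. Consequently min{ I(A⟩B)_{(id⊗N)(|Φ⟩⟨Φ|)} : N CPTP on the qubit with d(π,N) ≤ 3/4 } ≤ −1 < 0. -/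

import Mathlib

open Matrix BigOperators Filter
open scoped Classical ComplexOrder

noncomputable section

namespace QIT

/-- A density matrix (quantum state). -/
def IsState {A : Type*} [Fintype A] (ρ : Matrix A A ℂ) : Prop :=
  ρ.PosSemidef ∧ ρ.trace = 1

/-- A probability distribution on a finite type. -/
def IsProbDist {U : Type*} [Fintype U] (p : U → ℝ) : Prop :=
  (∀ u, 0 ≤ p u) ∧ ∑ u, p u = 1

/-- The outer product `|ψ⟩⟨ψ|`. -/
def proj {A : Type*} (ψ : A → ℂ) : Matrix A A ℂ :=
  Matrix.of fun i j => ψ i * (starRingEnd ℂ) (ψ j)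

/-- A unit vector. -/
def IsUnitVec {A : Type*} [Fintype A] (ψ : A → ℂ) : Prop :=
  ∑ p, Complex.normSq (ψ p) = 1

/-- Extraction of an operator block of a bipartite operator. -/
def blockL {R A : Type*} (r r' : R) :
    Matrix (R × A) (R × A) ℂ →ₗ[ℂ] Matrix A A ℂ where
  toFun X := Matrix.of fun i j => X (r, i) (r', j)
  map_add' X Y := by ext i j; rfl
  map_smul' c X := by ext i j; rfl

/-- The map `id_R ⊗ N`. -/
def lTensor (R : Type*) {A B : Type*} (N : Matrix A A ℂ →ₗ[ℂ] Matrix B B ℂ) :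
    Matrix (R × A) (R × A) ℂ →ₗ[ℂ] Matrix (R × B) (R × B) ℂ where
  toFun X := Matrix.of fun p q => N (blockL p.1 q.1 X) p.2 q.2
  map_add' X Y := by ext p q; simp [Matrix.of_apply, map_add, Matrix.add_apply]
  map_smul' c X := by ext p q; simp [Matrix.of_apply, _root_.map_smul, Matrix.smul_apply]

/-- Extraction of an operator block (right version). -/
def blockR {A T : Type*} (t t' : T) :
    Matrix (A × T) (A × T) ℂ →ₗ[ℂ] Matrix A A ℂ where
  toFun X := Matrix.of fun i j => X (i, t) (j, t')
  map_add' X Y := by ext i j; rfl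
  map_smul' c X := by ext i j; rfl

/-- The map `N ⊗ id_T`. -/
def rTensor (T : Type*) {A B : Type*} (N : Matrix A A ℂ →ₗ[ℂ] Matrix B B ℂ) :
    Matrix (A × T) (A × T) ℂ →ₗ[ℂ] Matrix (B × T) (B × T) ℂ where
  toFun X := Matrix.of fun p q => N (blockR p.2 q.2 X) p.1 q.1
  map_add' X Y := by ext p q; simp [Matrix.of_apply, map_add, Matrix.add_apply]
  map_smul' c X := by ext p q; simp [Matrix.of_apply, _root_.map_smul, Matrix.smul_apply]

/-- Partial trace over the first (left) factor. -/
def ptraceLeft {R A : Type*} [Fintype R] (X : Matrix (R × A) (R × A) ℂ) : Matrix A A ℂ :=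
  Matrix.of fun i j => ∑ r, X (r, i) (r, j)

/-- Partial trace over the second (right) factor. -/
def ptraceRight {R A : Type*} [Fintype A] (X : Matrix (R × A) (R × A) ℂ) : Matrix R R ℂ :=
  Matrix.of fun i j => ∑ a, X (i, a) (j, a)

/-- The von Neumann entropy (base 2). -/
def entropy {A : Type*} [Fintype A] [DecidableEq A] (ρ : Matrix A A ℂ) : ℝ :=
  if h : ρ.IsHermitian then -∑ i, h.eigenvalues i * Real.logb 2 (h.eigenvalues i) else 0

/-- Quantum mutual information `I(X;Y) = H(X)+H(Y)-H(XY)` of a bipartite state. -/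
def mutualInfo {X Y : Type*} [Fintype X] [Fintype Y] [DecidableEq X] [DecidableEq Y]
    (ω : Matrix (X × Y) (X × Y) ℂ) : ℝ :=
  entropy (ptraceRight ω) + entropy (ptraceLeft ω) - entropy ω

/-- Coherent information `I(X⟩Y) = H(Y) - H(XY)` of a bipartite state. -/
def cohInfo {X Y : Type*} [Fintype X] [Fintype Y] [DecidableEq X] [DecidableEq Y]
    (ω : Matrix (X × Y) (X × Y) ℂ) : ℝ :=
  entropy (ptraceLeft ω) - entropy ω

/-- Completely positive trace preserving maps. -/
def IsCPTP {A B : Type*} [Fintype A] [Fintype B]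
    (N : Matrix A A ℂ →ₗ[ℂ] Matrix B B ℂ) : Prop :=
  (∀ X, (N X).trace = X.trace) ∧
  ∀ (k : ℕ) (X : Matrix (Fin k × A) (Fin k × A) ℂ), X.PosSemidef →
    (lTensor (Fin k) N X).PosSemidef

/-- The quadratic form `⟨ψ|M|ψ⟩` (real part). -/
def quadForm {A : Type*} [Fintype A] (ψ : A → ℂ) (M : Matrix A A ℂ) : ℝ :=
  (∑ p, ∑ q, (starRingEnd ℂ) (ψ p) * M p q * ψ q).re

/-- The entanglement fidelity `F_e(ρ,N) = ⟨ψ|(id⊗N)(|ψ⟩⟨ψ|)|ψ⟩` w.r.t. a purification `ψ`. -/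
def entFid {R A : Type*} [Fintype R] [Fintype A]
    (ψ : R × A → ℂ) (N : Matrix A A ℂ →ₗ[ℂ] Matrix A A ℂ) : ℝ :=
  quadForm ψ (lTensor R N (proj ψ))

/-- The distortion `d(ρ,N) = 1 - F_e(ρ,N)`. -/
def distortion {R A : Type*} [Fintype R] [Fintype A]
    (ψ : R × A → ℂ) (N : Matrix A A ℂ →ₗ[ℂ] Matrix A A ℂ) : ℝ :=
  1 - entFid ψ N

/-- `ψ` is a purification of `ρ` (reference system on the left). -/
def IsPurification {R A : Type*} [Fintype R] [Fintype A]
    (ψ : R × A → ℂ) (ρ : Matrix A A ℂ) : Prop :=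
  IsUnitVec ψ ∧ ptraceLeft (proj ψ) = ρ


/-- Tensor power of a vector on a bipartite system, grouped as `R^n × A^n`. -/
def vecPow {R A : Type*} (ψ : R × A → ℂ) (n : ℕ) : (Fin n → R) × (Fin n → A) → ℂ :=
  fun p => ∏ i, ψ (p.1 i, p.2 i)

/-- Tensor power of a matrix. -/
def matPow {A : Type*} (ρ : Matrix A A ℂ) (n : ℕ) :
    Matrix (Fin n → A) (Fin n → A) ℂ :=
  Matrix.of fun f g => ∏ i, ρ (f i) (g i)

/-- Tensor power of a bipartite matrix, grouped as `R^n × A^n`. -/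
def matPow2 {R A : Type*} (ω : Matrix (R × A) (R × A) ℂ) (n : ℕ) :
    Matrix ((Fin n → R) × (Fin n → A)) ((Fin n → R) × (Fin n → A)) ℂ :=
  Matrix.of fun p q => ∏ i, ω (p.1 i, p.2 i) (q.1 i, q.2 i)

/-- The linear map `σ ↦ ρ ⊗ ⋯ ⊗ σ ⊗ ⋯ ⊗ ρ` with `σ` inserted in the `i`-th slot. -/
def insertAt {A : Type*} [Fintype A] (ρ : Matrix A A ℂ) {n : ℕ} (i : Fin n) :
    Matrix A A ℂ →ₗ[ℂ] Matrix (Fin n → A) (Fin n → A) ℂ where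
  toFun σ := Matrix.of fun f g => σ (f i) (g i) * ∏ j ∈ Finset.univ.erase i, ρ (f j) (g j)
  map_add' σ τ := by ext f g; simp [Matrix.add_apply, add_mul]
  map_smul' c σ := by ext f g; simp [Matrix.smul_apply, smul_eq_mul, mul_assoc]

/-- Partial trace over all tensor factors except the `i`-th. -/
def ptraceExceptL {A : Type*} [Fintype A] [DecidableEq A] {n : ℕ} (i : Fin n) :
    Matrix (Fin n → A) (Fin n → A) ℂ →ₗ[ℂ] Matrix A A ℂ where
  toFun X := Matrix.of fun a b =>
    ∑ f : Fin n → A, (if f i = a then 1 else 0) * X f (Function.update f i b)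
  map_add' X Y := by
    ext a b
    simp [Matrix.add_apply, mul_add, Finset.sum_add_distrib]
  map_smul' c X := by
    ext a b
    simp [Matrix.smul_apply, smul_eq_mul, Finset.mul_sum, mul_left_comm]

/-- The marginal operation on the `i`-th copy of the source induced by a channel `F` on `n`
copies, with the source state `ρ` in the remaining slots. -/
def marginal {A : Type*} [Fintype A] [DecidableEq A] (ρ : Matrix A A ℂ) {n : ℕ} (i : Fin n)
    (F : Matrix (Fin n → A) (Fin n → A) ℂ →ₗ[ℂ] Matrix (Fin n → A) (Fin n → A) ℂ) :
    Matrix A A ℂ →ₗ[ℂ] Matrix A A ℂ :=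
  ptraceExceptL i ∘ₗ F ∘ₗ insertAt ρ i

/-- Average (entanglement-fidelity) distortion of a channel `F` on `n` copies of the source. -/
def avgDistortion {R A : Type*} [Fintype R] [Fintype A] [DecidableEq A]
    (ρ : Matrix A A ℂ) (ψ : R × A → ℂ) {n : ℕ}
    (F : Matrix (Fin n → A) (Fin n → A) ℂ →ₗ[ℂ] Matrix (Fin n → A) (Fin n → A) ℂ) : ℝ :=
  (1 / n) * ∑ i, distortion ψ (marginal ρ i F)

/-- The dimension `⌈2^{nR}⌉`. -/
def cdim (n : ℕ) (Rr : ℝ) : ℕ := ⌈(2 : ℝ) ^ ((n : ℝ) * Rr)⌉₊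

/-- Tensoring with a fixed matrix on the right, as a linear map. -/
def kronRightL {A T : Type*} (Φ : Matrix T T ℂ) :
    Matrix A A ℂ →ₗ[ℂ] Matrix (A × T) (A × T) ℂ where
  toFun σ := Matrix.of fun p q => σ p.1 q.1 * Φ p.2 q.2
  map_add' X Y := by ext p q; simp [Matrix.add_apply, add_mul]
  map_smul' c X := by ext p q; simp [Matrix.smul_apply, smul_eq_mul, mul_assoc]

/-- The overall induced channel of an entanglement-assisted protocol: tensor in the shared
entangled state `Φ`, encode (acting on the source systems and `T_A`), send the result through
the channel `Nc`, and decode (acting on the channel output and `T_B`). -/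
def eaInduced {X Y A' B' tA tB : Type*}
    (Φ : Matrix (tA × tB) (tA × tB) ℂ)
    (E : Matrix (X × tA) (X × tA) ℂ →ₗ[ℂ] Matrix A' A' ℂ)
    (Dm : Matrix (B' × tB) (B' × tB) ℂ →ₗ[ℂ] Matrix Y Y ℂ)
    (Nc : Matrix A' A' ℂ →ₗ[ℂ] Matrix B' B' ℂ) :
    Matrix X X ℂ →ₗ[ℂ] Matrix Y Y ℂ :=
  Dm ∘ₗ rTensor tB Nc ∘ₗ rTensor tB E ∘ₗ
    (Matrix.reindexLinearEquiv ℂ ℂ (Equiv.prodAssoc X tA tB).symm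
      (Equiv.prodAssoc X tA tB).symm).toLinearMap ∘ₗ
    kronRightL Φ

/-- The equivalence `(Fin (n+1) → β) ≃ β × (Fin n → β)` (removed from Mathlib; old definition). -/
def _root_.Equiv.piFinSucc (n : ℕ) (β : Type*) : (Fin (n + 1) → β) ≃ β × (Fin n → β) :=
  (Fin.insertNthEquiv (fun _ => β) 0).symm

/-- Tensor power of a channel. -/
def chanPow {A B : Type*} (N : Matrix A A ℂ →ₗ[ℂ] Matrix B B ℂ) :
    (n : ℕ) → (Matrix (Fin n → A) (Fin n → A) ℂ →ₗ[ℂ] Matrix (Fin n → B) (Fin n → B) ℂ)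
  | 0 =>
    { toFun := fun X => Matrix.of fun _ _ => X (fun j => j.elim0) (fun j => j.elim0)
      map_add' := fun _ _ => rfl
      map_smul' := fun _ _ => rfl }
  | (n + 1) =>
    (Matrix.reindexLinearEquiv ℂ ℂ (Equiv.piFinSucc n B).symm
        (Equiv.piFinSucc n B).symm).toLinearMap
      ∘ₗ lTensor B (chanPow N n)
      ∘ₗ rTensor (Fin n → A) N
      ∘ₗ (Matrix.reindexLinearEquiv ℂ ℂ (Equiv.piFinSucc n A)
        (Equiv.piFinSucc n A)).toLinearMap

/-- The square root of a positive semidefinite matrix (removed from Mathlib; old definition). -/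
def _root_.Matrix.PosSemidef.sqrt {n 𝕜 : Type*} [Fintype n] [DecidableEq n] [RCLike 𝕜]
    {A : Matrix n n 𝕜} (hA : A.PosSemidef) : Matrix n n 𝕜 :=
  (hA.1.eigenvectorUnitary : Matrix n n 𝕜) * diagonal ((↑) ∘ Real.sqrt ∘ hA.1.eigenvalues) *
    (star hA.1.eigenvectorUnitary : Matrix n n 𝕜)

/-- The trace norm `‖X‖₁ = Tr √(X†X)`. -/
def traceNorm {A : Type*} [Fintype A] [DecidableEq A] (X : Matrix A A ℂ) : ℝ :=
  ((Matrix.posSemidef_conjTranspose_mul_self X).sqrt.trace).re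

/-- The sum of the negative eigenvalues of a Hermitian matrix. -/
def negPart {A : Type*} [Fintype A] [DecidableEq A] (X : Matrix A A ℂ) : ℝ :=
  if h : X.IsHermitian then ∑ i, min (h.eigenvalues i) 0 else 0

/-- The entanglement of purification of a bipartite state `ω` on `X ⊗ Y`:  take the canonical
purification to an environment `E ≅ X ⊗ Y`, discard `X`, and minimize the output entropy over
channels acting on `E` (with outputs of arbitrary finite dimension). -/
def Ep {X Y : Type*} [Fintype X] [Fintype Y] [DecidableEq X] [DecidableEq Y]
    (ω : Matrix (X × Y) (X × Y) ℂ) : ℝ :=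
  if hω : ω.PosSemidef then
    sInf { x | ∃ (e : ℕ) (Λ : Matrix (X × Y) (X × Y) ℂ →ₗ[ℂ] Matrix (Fin e) (Fin e) ℂ),
      IsCPTP Λ ∧
      x = entropy (lTensor Y Λ (ptraceLeft
        (Matrix.reindex (Equiv.prodAssoc X Y (X × Y)) (Equiv.prodAssoc X Y (X × Y))
          (proj (fun p => hω.sqrt p.1 p.2))))) }
  else 0

/-- Shannon entropy (base 2) of a distribution. -/
def shannonEntropy {U : Type*} [Fintype U] (p : U → ℝ) : ℝ :=
  -∑ u, p u * Real.logb 2 (p u)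

/-- Classical mutual information (base 2) of a joint distribution. -/
def classicalMI {U V : Type*} [Fintype U] [Fintype V] (j : U → V → ℝ) : ℝ :=
  ∑ u, ∑ v, j u v * Real.logb 2 (j u v / ((∑ v', j u v') * (∑ u', j u' v)))

/-- Shannon's rate-distortion function of a source `p` w.r.t. a distortion measure `dmeas`. -/
def classicalRD {U V : Type*} [Fintype U] [Fintype V]
    (p : U → ℝ) (dmeas : U → V → ℝ) (D : ℝ) : ℝ :=
  sInf { x | ∃ q : U → V → ℝ, (∀ u v, 0 ≤ q u v) ∧ (∀ u, ∑ v, q u v = 1) ∧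
    (∑ u, ∑ v, p u * q u v * dmeas u v) ≤ D ∧
    x = classicalMI (fun u v => p u * q u v) }

/-- The Holevo capacity `χ*(N)` of a quantum channel. -/
def holevoCap {A B : Type*} [Fintype A] [Fintype B] [DecidableEq B]
    (N : Matrix A A ℂ →ₗ[ℂ] Matrix B B ℂ) : ℝ :=
  sSup { x | ∃ (m : ℕ) (q : Fin m → ℝ) (σ : Fin m → Matrix A A ℂ),
    IsProbDist q ∧ (∀ i, IsState (σ i)) ∧
    x = mutualInfo (Matrix.of fun p p' : Fin m × B =>
      if p.1 = p'.1 then ((q p.1 : ℂ)) * N (σ p.1) p.2 p'.2 else 0) }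

/-- The coherent information `Q(N)` of a quantum channel (maximized over pure inputs). -/
def cohInfoCap {A B : Type*} [Fintype A] [Fintype B] [DecidableEq A] [DecidableEq B]
    (N : Matrix A A ℂ →ₗ[ℂ] Matrix B B ℂ) : ℝ :=
  sSup { x | ∃ φ : A × A → ℂ, IsUnitVec φ ∧ x = cohInfo (lTensor A N (proj φ)) }

/-- The mutual information `I(N)` of a quantum channel (maximized over pure inputs). -/
def miCap {A B : Type*} [Fintype A] [Fintype B] [DecidableEq A] [DecidableEq B]
    (N : Matrix A A ℂ →ₗ[ℂ] Matrix B B ℂ) : ℝ :=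
  sSup { x | ∃ φ : A × A → ℂ, IsUnitVec φ ∧ x = mutualInfo (lTensor A N (proj φ)) }


/-- `F` is the overall induced map of an `(n, Rr)` entanglement-assisted rate-distortion code
with *classical* communication: the message register has dimension `⌈2^{nR}⌉` and the encoder
output is classical (diagonal in a fixed basis). -/
def IsEACCodeMap {A : Type*} [Fintype A] [DecidableEq A] (Rr : ℝ) (n : ℕ)
    (F : Matrix (Fin n → A) (Fin n → A) ℂ →ₗ[ℂ] Matrix (Fin n → A) (Fin n → A) ℂ) : Prop :=
  ∃ (tA tB : ℕ) (φ : (Fin tA × Fin tB) → ℂ)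
    (E : Matrix ((Fin n → A) × Fin tA) ((Fin n → A) × Fin tA) ℂ →ₗ[ℂ]
      Matrix (Fin (cdim n Rr)) (Fin (cdim n Rr)) ℂ)
    (Dm : Matrix (Fin (cdim n Rr) × Fin tB) (Fin (cdim n Rr) × Fin tB) ℂ →ₗ[ℂ]
      Matrix (Fin n → A) (Fin n → A) ℂ),
    IsUnitVec φ ∧ IsCPTP E ∧ IsCPTP Dm ∧
    (∀ X w w', w ≠ w' → E X w w' = 0) ∧
    F = eaInduced (proj φ) E Dm LinearMap.id

/-- `F` is the overall induced map of an `(n, Rr)` entanglement-assisted rate-distortion code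
with *quantum* communication: the transmitted register has dimension `⌈2^{nR}⌉`. -/
def IsEAQCodeMap {A : Type*} [Fintype A] [DecidableEq A] (Rr : ℝ) (n : ℕ)
    (F : Matrix (Fin n → A) (Fin n → A) ℂ →ₗ[ℂ] Matrix (Fin n → A) (Fin n → A) ℂ) : Prop :=
  ∃ (tA tB : ℕ) (φ : (Fin tA × Fin tB) → ℂ)
    (E : Matrix ((Fin n → A) × Fin tA) ((Fin n → A) × Fin tA) ℂ →ₗ[ℂ]
      Matrix (Fin (cdim n Rr)) (Fin (cdim n Rr)) ℂ)
    (Dm : Matrix (Fin (cdim n Rr) × Fin tB) (Fin (cdim n Rr) × Fin tB) ℂ →ₗ[ℂ]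
      Matrix (Fin n → A) (Fin n → A) ℂ),
    IsUnitVec φ ∧ IsCPTP E ∧ IsCPTP Dm ∧
    F = eaInduced (proj φ) E Dm LinearMap.id

/-- `F` is the overall induced map of an `(n, Rr)` unassisted quantum rate-distortion code:
compression to a register of dimension `⌈2^{nR}⌉` followed by decompression. -/
def IsQCodeMap {A : Type*} [Fintype A] [DecidableEq A] (Rr : ℝ) (n : ℕ)
    (F : Matrix (Fin n → A) (Fin n → A) ℂ →ₗ[ℂ] Matrix (Fin n → A) (Fin n → A) ℂ) : Prop :=
  ∃ (E : Matrix (Fin n → A) (Fin n → A) ℂ →ₗ[ℂ]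
      Matrix (Fin (cdim n Rr)) (Fin (cdim n Rr)) ℂ)
    (Dm : Matrix (Fin (cdim n Rr)) (Fin (cdim n Rr)) ℂ →ₗ[ℂ]
      Matrix (Fin n → A) (Fin n → A) ℂ),
    IsCPTP E ∧ IsCPTP Dm ∧ F = Dm ∘ₗ E

/-- `(Rr, D)` is an achievable entanglement-assisted classical rate-distortion pair. -/
def eacAchievable {R A : Type*} [Fintype R] [Fintype A] [DecidableEq A]
    (ρ : Matrix A A ℂ) (ψ : R × A → ℂ) (Rr D : ℝ) : Prop :=
  ∃ F : (n : ℕ) → (Matrix (Fin n → A) (Fin n → A) ℂ →ₗ[ℂ] Matrix (Fin n → A) (Fin n → A) ℂ),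
    (∀ n, IsEACCodeMap Rr n (F n)) ∧
    Filter.limsup (fun n => avgDistortion ρ ψ (F n)) Filter.atTop ≤ D

/-- `(Rr, D)` is an achievable entanglement-assisted quantum rate-distortion pair. -/
def eaqAchievable {R A : Type*} [Fintype R] [Fintype A] [DecidableEq A]
    (ρ : Matrix A A ℂ) (ψ : R × A → ℂ) (Rr D : ℝ) : Prop :=
  ∃ F : (n : ℕ) → (Matrix (Fin n → A) (Fin n → A) ℂ →ₗ[ℂ] Matrix (Fin n → A) (Fin n → A) ℂ),
    (∀ n, IsEAQCodeMap Rr n (F n)) ∧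
    Filter.limsup (fun n => avgDistortion ρ ψ (F n)) Filter.atTop ≤ D

/-- `(Rr, D)` is an achievable unassisted quantum rate-distortion pair. -/
def qAchievable {R A : Type*} [Fintype R] [Fintype A] [DecidableEq A]
    (ρ : Matrix A A ℂ) (ψ : R × A → ℂ) (Rr D : ℝ) : Prop :=
  ∃ F : (n : ℕ) → (Matrix (Fin n → A) (Fin n → A) ℂ →ₗ[ℂ] Matrix (Fin n → A) (Fin n → A) ℂ),
    (∀ n, IsQCodeMap Rr n (F n)) ∧
    Filter.limsup (fun n => avgDistortion ρ ψ (F n)) Filter.atTop ≤ D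

/-- The entanglement-assisted classical rate-distortion function. -/
def Reac {R A : Type*} [Fintype R] [Fintype A] [DecidableEq A]
    (ρ : Matrix A A ℂ) (ψ : R × A → ℂ) (D : ℝ) : ℝ :=
  sInf { Rr | eacAchievable ρ ψ Rr D }

/-- The entanglement-assisted quantum rate-distortion function. -/
def Reaq {R A : Type*} [Fintype R] [Fintype A] [DecidableEq A]
    (ρ : Matrix A A ℂ) (ψ : R × A → ℂ) (D : ℝ) : ℝ :=
  sInf { Rr | eaqAchievable ρ ψ Rr D }

/-- The unassisted quantum rate-distortion function. -/
def Rq {R A : Type*} [Fintype R] [Fintype A] [DecidableEq A]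
    (ρ : Matrix A A ℂ) (ψ : R × A → ℂ) (D : ℝ) : ℝ :=
  sInf { Rr | qAchievable ρ ψ Rr D }

/-- The information rate-distortion function:  minimal input-output mutual information over all
channels meeting the distortion constraint. -/
def infoRD {R A : Type*} [Fintype R] [Fintype A] [DecidableEq R] [DecidableEq A]
    (ψ : R × A → ℂ) (D : ℝ) : ℝ :=
  sInf { x | ∃ N : Matrix A A ℂ →ₗ[ℂ] Matrix A A ℂ,
    IsCPTP N ∧ distortion ψ N ≤ D ∧ x = mutualInfo (lTensor R N (proj ψ)) }


/-- A memoryless classical source `p` can be reliably transmitted over the quantum channel `N`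
(one channel use per source output): for every `ε > 0` and all sufficiently large `n` there is
a scheme (encoding source sequences into channel-input states, decoding by a POVM indexed by
source sequences) whose error probability is at most `ε`. -/
def ReliablyTransmits {U A B : Type*} [Fintype U] [Fintype A] [Fintype B]
    (p : U → ℝ) (N : Matrix A A ℂ →ₗ[ℂ] Matrix B B ℂ) : Prop :=
  ∀ ε : ℝ, 0 < ε → ∀ᶠ n in Filter.atTop,
    ∃ (enc : (Fin n → U) → Matrix (Fin n → A) (Fin n → A) ℂ)
      (dec : (Fin n → U) → Matrix (Fin n → B) (Fin n → B) ℂ),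
      (∀ u, IsState (enc u)) ∧ (∀ u, (dec u).PosSemidef) ∧ (∑ u, dec u = 1) ∧
      (∑ u : Fin n → U, (∏ i, p (u i)) *
        (1 - ((dec u * chanPow N n (enc u)).trace).re)) ≤ ε

/-- A memoryless classical source `p` can be transmitted over the quantum channel `N` up to
average distortion `D` w.r.t. the distortion measure `dmeas` (one channel use per source
output). -/
def TransmitsWithDistortion {U V A B : Type*} [Fintype U] [Fintype V] [Fintype A] [Fintype B]
    (p : U → ℝ) (dmeas : U → V → ℝ) (N : Matrix A A ℂ →ₗ[ℂ] Matrix B B ℂ) (D : ℝ) : Prop :=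
  ∀ ε : ℝ, 0 < ε → ∀ᶠ n in Filter.atTop,
    ∃ (enc : (Fin n → U) → Matrix (Fin n → A) (Fin n → A) ℂ)
      (dec : (Fin n → V) → Matrix (Fin n → B) (Fin n → B) ℂ),
      (∀ u, IsState (enc u)) ∧ (∀ v, (dec v).PosSemidef) ∧ (∑ v, dec v = 1) ∧
      (∑ u : Fin n → U, ∑ v : Fin n → V, (∏ i, p (u i)) *
        (((dec v * chanPow N n (enc u)).trace).re * ((1 / n) * ∑ i, dmeas (u i) (v i)))) ≤
        D + ε

/-- A memoryless quantum source (with purification `ψ`) can be faithfully transmitted over the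
quantum channel `N` (one channel use per source output, trace-norm error at most `ε`). -/
def FaithfullyTransmits {R A A' B : Type*} [Fintype R] [Fintype A] [Fintype A'] [Fintype B]
    [DecidableEq R] [DecidableEq A]
    (ψ : R × A → ℂ) (N : Matrix A' A' ℂ →ₗ[ℂ] Matrix B B ℂ) : Prop :=
  ∀ ε : ℝ, 0 < ε → ∀ᶠ n in Filter.atTop,
    ∃ (E : Matrix (Fin n → A) (Fin n → A) ℂ →ₗ[ℂ] Matrix (Fin n → A') (Fin n → A') ℂ)
      (Dm : Matrix (Fin n → B) (Fin n → B) ℂ →ₗ[ℂ] Matrix (Fin n → A) (Fin n → A) ℂ),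
      IsCPTP E ∧ IsCPTP Dm ∧
      traceNorm (proj (vecPow ψ n) -
        lTensor (Fin n → R) (Dm ∘ₗ chanPow N n ∘ₗ E) (proj (vecPow ψ n))) ≤ ε

/-- A memoryless quantum source (with purification `ψ`) can be faithfully transmitted over the
quantum channel `N` with the help of unlimited prior shared entanglement. -/
def EAFaithfullyTransmits {R A A' B : Type*} [Fintype R] [Fintype A] [Fintype A'] [Fintype B]
    [DecidableEq R] [DecidableEq A]
    (ψ : R × A → ℂ) (N : Matrix A' A' ℂ →ₗ[ℂ] Matrix B B ℂ) : Prop :=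
  ∀ ε : ℝ, 0 < ε → ∀ᶠ n in Filter.atTop,
    ∃ (tA tB : ℕ) (φ : (Fin tA × Fin tB) → ℂ)
      (E : Matrix ((Fin n → A) × Fin tA) ((Fin n → A) × Fin tA) ℂ →ₗ[ℂ]
        Matrix (Fin n → A') (Fin n → A') ℂ)
      (Dm : Matrix ((Fin n → B) × Fin tB) ((Fin n → B) × Fin tB) ℂ →ₗ[ℂ]
        Matrix (Fin n → A) (Fin n → A) ℂ),
      IsUnitVec φ ∧ IsCPTP E ∧ IsCPTP Dm ∧
      traceNorm (proj (vecPow ψ n) -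
        lTensor (Fin n → R) (eaInduced (proj φ) E Dm (chanPow N n)) (proj (vecPow ψ n))) ≤ ε

/-- A memoryless quantum source can be transmitted over the quantum channel `N`, with unlimited
prior shared entanglement, up to average entanglement-fidelity distortion `D`. -/
def EATransmitsWithDistortion {R A : Type*} [Fintype R] [Fintype A]
    [DecidableEq R] [DecidableEq A] {A' B : Type*} [Fintype A'] [Fintype B]
    (ρ : Matrix A A ℂ) (ψ : R × A → ℂ) (N : Matrix A' A' ℂ →ₗ[ℂ] Matrix B B ℂ) (D : ℝ) :
    Prop :=
  ∀ ε : ℝ, 0 < ε → ∀ᶠ n in Filter.atTop,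
    ∃ (tA tB : ℕ) (φ : (Fin tA × Fin tB) → ℂ)
      (E : Matrix ((Fin n → A) × Fin tA) ((Fin n → A) × Fin tA) ℂ →ₗ[ℂ]
        Matrix (Fin n → A') (Fin n → A') ℂ)
      (Dm : Matrix ((Fin n → B) × Fin tB) ((Fin n → B) × Fin tB) ℂ →ₗ[ℂ]
        Matrix (Fin n → A) (Fin n → A) ℂ),
      IsUnitVec φ ∧ IsCPTP E ∧ IsCPTP Dm ∧
      avgDistortion ρ ψ (eaInduced (proj φ) E Dm (chanPow N n)) ≤ D + ε


/-- The completely depolarizing qubit channel `X ↦ Tr[X]·I/2`. -/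
def depol : Matrix (Fin 2) (Fin 2) ℂ →ₗ[ℂ] Matrix (Fin 2) (Fin 2) ℂ where
  toFun X := X.trace • ((1 / 2 : ℂ) • (1 : Matrix (Fin 2) (Fin 2) ℂ))
  map_add' X Y := by simp [Matrix.trace_add, add_smul]
  map_smul' c X := by simp [Matrix.trace_smul, smul_smul, mul_assoc]

/-- The Bell state `(|00⟩ + |11⟩)/√2`. -/
def bell : Fin 2 × Fin 2 → ℂ := fun p => if p.1 = p.2 then (Real.sqrt 2 : ℂ)⁻¹ else 0


section Aux

variable {n : Type*} [Fintype n] [DecidableEq n]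

lemma trace_eq_sum_eigenvalues {A : Matrix n n ℂ} (hA : A.IsHermitian) :
    A.trace = ∑ i, (hA.eigenvalues i : ℂ) := by
  conv_lhs => rw [hA.spectral_theorem, Unitary.conjStarAlgAut_apply]
  rw [Matrix.trace_mul_comm, ← mul_assoc,
    (Matrix.mem_unitaryGroup_iff').mp (hA.eigenvectorUnitary).2]
  simp [Matrix.trace_diagonal]

lemma isHermitian_real_smul_one (r : ℝ) : ((r : ℂ) • (1 : Matrix n n ℂ)).IsHermitian := by
  have : ((r : ℂ) • (1 : Matrix n n ℂ))ᴴ = star (r : ℂ) • ((1 : Matrix n n ℂ))ᴴ :=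
    Matrix.conjTranspose_smul _ _
  rw [Matrix.IsHermitian, this, Matrix.conjTranspose_one, RCLike.star_def, Complex.conj_ofReal]

lemma eigenvalues_real_smul_one (r : ℝ)
    (h : ((r : ℂ) • (1 : Matrix n n ℂ)).IsHermitian) (i : n) : h.eigenvalues i = r := by
  have H := h.eigenvalues_eq i
  rw [Matrix.smul_mulVec, Matrix.one_mulVec, dotProduct_smul, dotProduct_comm,
    ← EuclideanSpace.inner_eq_star_dotProduct] at H
  simpa [h.eigenvectorBasis.orthonormal.1 i] using H

lemma entropy_real_smul_one (r : ℝ) :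
    entropy ((r : ℂ) • (1 : Matrix n n ℂ)) =
      -(Fintype.card n * (r * Real.logb 2 r)) := by
  rw [entropy, dif_pos (isHermitian_real_smul_one r)]
  simp [eigenvalues_real_smul_one r (isHermitian_real_smul_one r)]

lemma sum_eigenvalues_eq_one {ρ : Matrix n n ℂ} (hρ : ρ.PosSemidef) (ht : ρ.trace = 1) :
    ∑ i, hρ.1.eigenvalues i = 1 := by
  have h := trace_eq_sum_eigenvalues hρ.1
  rw [ht] at h
  exact_mod_cast h.symm

lemma eigenvalues_le_one {ρ : Matrix n n ℂ} (hρ : ρ.PosSemidef) (ht : ρ.trace = 1) (i : n) :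
    hρ.1.eigenvalues i ≤ 1 := by
  rw [← sum_eigenvalues_eq_one hρ ht]
  exact Finset.single_le_sum (fun j _ => hρ.eigenvalues_nonneg j) (Finset.mem_univ i)

lemma entropy_nonneg {ρ : Matrix n n ℂ} (hρ : ρ.PosSemidef) (ht : ρ.trace = 1) :
    0 ≤ entropy ρ := by
  rw [entropy, dif_pos hρ.1, neg_nonneg]
  refine Finset.sum_nonpos fun i _ => mul_nonpos_of_nonneg_of_nonpos (hρ.eigenvalues_nonneg i) ?_
  exact Real.logb_nonpos one_lt_two (hρ.eigenvalues_nonneg i) (eigenvalues_le_one hρ ht i)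

lemma neg_mul_logb_le_two {x : ℝ} (hx : 0 ≤ x) : -(x * Real.logb 2 x) ≤ 2 := by
  have h2 : 0 < Real.log 2 := Real.log_pos one_lt_two
  rcases hx.eq_or_lt with h | h
  · simp [← h]
  · have hlog : Real.log x⁻¹ ≤ x⁻¹ - 1 := Real.log_le_sub_one_of_pos (inv_pos.2 h)
    rw [Real.log_inv] at hlog
    have h1 : -(x * Real.log x) ≤ 1 - x := by
      nlinarith [mul_le_mul_of_nonneg_left hlog h.le, mul_inv_cancel₀ h.ne']
    have : -(x * Real.logb 2 x) = (-(x * Real.log x)) / Real.log 2 := by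
      rw [Real.logb]; ring
    rw [this, div_le_iff₀ h2]
    nlinarith [Real.log_two_gt_d9]

lemma entropy_le_two_mul_card {ρ : Matrix n n ℂ} (hρ : ρ.PosSemidef) :
    entropy ρ ≤ 2 * Fintype.card n := by
  rw [entropy, dif_pos hρ.1, ← Finset.sum_neg_distrib]
  calc ∑ i, -(hρ.1.eigenvalues i * Real.logb 2 (hρ.1.eigenvalues i))
      ≤ ∑ _i : n, (2 : ℝ) :=
        Finset.sum_le_sum fun i _ => neg_mul_logb_le_two (hρ.eigenvalues_nonneg i)
    _ = 2 * Fintype.card n := by simp [mul_comm]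

lemma proj_posSemidef {A : Type*} [Fintype A] [DecidableEq A] (ψ : A → ℂ) :
    (proj ψ).PosSemidef := by
  refine Matrix.posSemidef_iff_dotProduct_mulVec.mpr ⟨?_, ?_⟩
  · ext i j
    simp [proj, Matrix.conjTranspose_apply, mul_comm]
  · intro v
    have : star v ⬝ᵥ (proj ψ *ᵥ v) =
        star (∑ j, (starRingEnd ℂ) (ψ j) * v j) * (∑ j, (starRingEnd ℂ) (ψ j) * v j) := by
      simp only [dotProduct, mulVec, proj, Matrix.of_apply, Pi.star_apply, Finset.mul_sum,
        Finset.sum_mul, star_sum, star_mul', RCLike.star_def, RingHomCompTriple.comp_apply,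
        RingHom.id_apply, starRingEnd_self_apply]
      rw [Finset.sum_comm]
      apply Finset.sum_congr rfl; intro j _
      apply Finset.sum_congr rfl; intro i _
      ring
    rw [this]
    exact star_mul_self_nonneg _

lemma proj_trace {A : Type*} [Fintype A] {ψ : A → ℂ} (h : IsUnitVec ψ) :
    (proj ψ).trace = 1 := by
  simp only [proj, Matrix.trace, Matrix.diag, Matrix.of_apply, Complex.mul_conj]
  rw [← Complex.ofReal_sum]
  exact_mod_cast congrArg (Complex.ofReal) h

lemma ptraceLeft_trace {R A : Type*} [Fintype R] [Fintype A] (X : Matrix (R × A) (R × A) ℂ) :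
    (ptraceLeft X).trace = X.trace := by
  simp only [ptraceLeft, Matrix.trace, Matrix.diag, Matrix.of_apply, Fintype.sum_prod_type]
  exact Finset.sum_comm

lemma ptraceLeft_posSemidef {R A : Type*} [Fintype R] [Fintype A] [DecidableEq R]
    {X : Matrix (R × A) (R × A) ℂ} (hX : X.PosSemidef) : (ptraceLeft X).PosSemidef := by
  refine Matrix.posSemidef_iff_dotProduct_mulVec.mpr ⟨?_, ?_⟩
  · ext i j
    simp only [ptraceLeft, Matrix.conjTranspose_apply, Matrix.of_apply, star_sum]
    apply Finset.sum_congr rfl; intro r _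
    exact congrFun (congrFun hX.1 (r, i)) (r, j)
  · intro v
    have single : ∀ r : R, star (fun p : R × A => if p.1 = r then v p.2 else 0) ⬝ᵥ
          (X *ᵥ (fun p : R × A => if p.1 = r then v p.2 else 0)) =
        ∑ i, ∑ j, star (v i) * (X (r, i) (r, j) * v j) := by
      intro r
      simp only [dotProduct, mulVec, Pi.star_apply, Fintype.sum_prod_type, mul_ite, mul_zero,
        apply_ite (star : ℂ → ℂ), star_zero, ite_mul, zero_mul, Finset.sum_ite_irrel,
        Finset.sum_const_zero, Finset.sum_ite_eq', Finset.mem_univ, if_true, Finset.mul_sum]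
    have key : star v ⬝ᵥ (ptraceLeft X *ᵥ v) =
        ∑ r : R, ∑ i, ∑ j, star (v i) * (X (r, i) (r, j) * v j) := by
      simp only [dotProduct, mulVec, ptraceLeft, Matrix.of_apply, Pi.star_apply,
        Finset.sum_mul, Finset.mul_sum]
      rw [Finset.sum_congr rfl fun x _ => Finset.sum_comm, Finset.sum_comm]
    rw [key, Finset.sum_congr rfl fun r _ => (single r).symm]
    exact Finset.sum_nonneg fun r _ => hX.dotProduct_mulVec_nonneg _

lemma lTensor_trace {R A B : Type*} [Fintype R] [Fintype A] [Fintype B]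
    {N : Matrix A A ℂ →ₗ[ℂ] Matrix B B ℂ} (hN : ∀ X, (N X).trace = X.trace)
    (X : Matrix (R × A) (R × A) ℂ) : (lTensor R N X).trace = X.trace := by
  simp only [Matrix.trace, Matrix.diag, Fintype.sum_prod_type, lTensor, LinearMap.coe_mk,
    AddHom.coe_mk, Matrix.of_apply]
  refine Finset.sum_congr rfl fun r _ => ?_
  have h := hN (blockL r r X)
  simpa [Matrix.trace, Matrix.diag, blockL] using h

end Aux


section Aux2

lemma depol_trace (X : Matrix (Fin 2) (Fin 2) ℂ) : (depol X).trace = X.trace := by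
  simp [depol, Matrix.trace_smul, Matrix.trace_one, smul_eq_mul]

lemma lTensor_depol_apply {k : ℕ} (X : Matrix (Fin k × Fin 2) (Fin k × Fin 2) ℂ)
    (p q : Fin k × Fin 2) : lTensor (Fin k) depol X p q =
      if p.2 = q.2 then (1 / 2 : ℂ) * ∑ a, X (p.1, a) (q.1, a) else 0 := by
  simp only [lTensor, depol, blockL, LinearMap.coe_mk, AddHom.coe_mk, Matrix.of_apply,
    Matrix.smul_apply, Matrix.one_apply, Matrix.trace, Matrix.diag, smul_eq_mul, mul_ite,
    mul_one, mul_zero]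
  by_cases h : p.2 = q.2 <;> simp [h] <;> ring

lemma lTensor_depol_posSemidef {k : ℕ} (X : Matrix (Fin k × Fin 2) (Fin k × Fin 2) ℂ)
    (hX : X.PosSemidef) : (lTensor (Fin k) depol X).PosSemidef := by
  refine Matrix.posSemidef_iff_dotProduct_mulVec.mpr ⟨?_, ?_⟩
  · ext p q
    rw [Matrix.conjTranspose_apply, lTensor_depol_apply, lTensor_depol_apply]
    by_cases h : p.2 = q.2
    · rw [if_pos h.symm, if_pos h, star_mul', star_sum]
      have hs : ∀ a, star (X (q.1, a) (p.1, a)) = X (p.1, a) (q.1, a) := fun a => by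
        have h2 := congrFun (congrFun hX.1 (p.1, a)) (q.1, a)
        rwa [Matrix.conjTranspose_apply] at h2
      simp [hs, star_div₀]
    · rw [if_neg (fun hh => h hh.symm), if_neg h, star_zero]
  · intro v
    set w : Fin 2 → Fin 2 → (Fin k × Fin 2 → ℂ) :=
      fun i a => fun p => if p.2 = a then v (p.1, i) else 0 with hw
    have single : ∀ i a, star (w i a) ⬝ᵥ (X *ᵥ w i a) =
        ∑ r, ∑ r', star (v (r, i)) * (X (r, a) (r', a) * v (r', i)) := by
      intro i a
      simp only [hw, dotProduct, mulVec, Pi.star_apply, Fintype.sum_prod_type, mul_ite, mul_zero,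
        apply_ite (star : ℂ → ℂ), star_zero, ite_mul, zero_mul, Finset.sum_ite_irrel,
        Finset.sum_const_zero, Finset.sum_ite_eq', Finset.mem_univ, if_true, Finset.mul_sum]
    have key : star v ⬝ᵥ (lTensor (Fin k) depol X *ᵥ v) =
        ∑ i : Fin 2, ∑ a : Fin 2, (1/2 : ℂ) * (star (w i a) ⬝ᵥ (X *ᵥ w i a)) := by
      simp only [single]
      simp only [dotProduct, mulVec, lTensor_depol_apply, Pi.star_apply, Fintype.sum_prod_type,
        ite_mul, zero_mul, mul_ite, mul_zero, Finset.sum_ite_irrel, Finset.sum_const_zero,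
        Finset.sum_ite_eq', Finset.sum_ite_eq, Finset.mem_univ, if_true, Finset.mul_sum,
        Finset.sum_mul]
      rw [Finset.sum_congr rfl fun r _ => Finset.sum_congr rfl fun i _ => Finset.sum_comm,
        Finset.sum_comm, Finset.sum_congr rfl fun i _ => Finset.sum_comm]
      refine Finset.sum_congr rfl fun i _ => Finset.sum_congr rfl fun a _ =>
        Finset.sum_congr rfl fun r _ => Finset.sum_congr rfl fun r' _ => ?_
      ring
    rw [key]
    refine Finset.sum_nonneg fun i _ => Finset.sum_nonneg fun a _ => mul_nonneg ?_ (hX.dotProduct_mulVec_nonneg _)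
    rw [show (1/2 : ℂ) = ((1/2 : ℝ) : ℂ) by norm_num]
    exact_mod_cast (by norm_num : (0:ℝ) ≤ 1/2)

lemma depol_cptp : IsCPTP depol :=
  ⟨depol_trace, fun _ X hX => lTensor_depol_posSemidef X hX⟩

lemma bell_sq : ((Real.sqrt 2 : ℂ))⁻¹ * (starRingEnd ℂ) ((Real.sqrt 2 : ℂ))⁻¹ = 1/2 := by
  rw [map_inv₀, Complex.conj_ofReal, ← mul_inv, ← Complex.ofReal_mul,
    Real.mul_self_sqrt (by norm_num : (0:ℝ) ≤ 2)]
  norm_num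

lemma bell_sq' : ((Real.sqrt 2 : ℂ))⁻¹ * ((Real.sqrt 2 : ℂ))⁻¹ = 1/2 := by
  rw [← mul_inv, ← Complex.ofReal_mul, Real.mul_self_sqrt (by norm_num : (0:ℝ) ≤ 2)]
  norm_num

lemma bell_normSq : Complex.normSq ((Real.sqrt 2 : ℂ))⁻¹ = 1/2 := by
  rw [map_inv₀, Complex.normSq_ofReal, Real.mul_self_sqrt (by norm_num : (0:ℝ) ≤ 2)]
  norm_num

lemma bell_unit : IsUnitVec bell := by
  simp [IsUnitVec, bell, Fintype.sum_prod_type, Fin.sum_univ_two, bell_normSq]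
  norm_num

lemma ptraceLeft_proj_bell :
    ptraceLeft (proj bell) = (1 / 2 : ℂ) • (1 : Matrix (Fin 2) (Fin 2) ℂ) := by
  ext i j
  simp only [ptraceLeft, proj, Matrix.of_apply, bell, Matrix.smul_apply, Matrix.one_apply,
    smul_eq_mul]
  fin_cases i <;> fin_cases j <;>
    simp [Fin.sum_univ_two, bell_sq] <;> norm_num [bell_sq']

lemma lTensor_depol_proj_bell :
    lTensor (Fin 2) depol (proj bell) =
      (1 / 4 : ℂ) • (1 : Matrix (Fin 2 × Fin 2) (Fin 2 × Fin 2) ℂ) := by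
  ext p q
  obtain ⟨r, i⟩ := p; obtain ⟨r', j⟩ := q
  rw [lTensor_depol_apply]
  simp only [proj, Matrix.of_apply, bell, Matrix.smul_apply, Matrix.one_apply, smul_eq_mul,
    Prod.mk.injEq]
  fin_cases r <;> fin_cases i <;> fin_cases r' <;> fin_cases j <;>
    simp [Fin.sum_univ_two, bell_sq] <;> norm_num [bell_sq']

lemma quadForm_real_smul_one {A : Type*} [Fintype A] [DecidableEq A] (c : ℝ) {ψ : A → ℂ}
    (h : IsUnitVec ψ) : quadForm ψ ((c : ℂ) • (1 : Matrix A A ℂ)) = c := by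
  rw [quadForm]
  have key : ∀ p : A, ∑ q, (starRingEnd ℂ) (ψ p) * (((c : ℂ) • (1 : Matrix A A ℂ)) p q) * ψ q
      = (c : ℂ) * (Complex.normSq (ψ p) : ℂ) := by
    intro p
    simp only [Matrix.smul_apply, Matrix.one_apply, smul_eq_mul, mul_ite, mul_one, mul_zero,
      ite_mul, zero_mul, Finset.sum_ite_eq, Finset.mem_univ, if_true]
    rw [← Complex.mul_conj]
    ring
  rw [Finset.sum_congr rfl fun p _ => key p, ← Finset.mul_sum, ← Complex.ofReal_sum, h]
  simp

lemma ptraceLeft_quarter_one :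
    ptraceLeft ((1 / 4 : ℂ) • (1 : Matrix (Fin 2 × Fin 2) (Fin 2 × Fin 2) ℂ)) =
      (1 / 2 : ℂ) • (1 : Matrix (Fin 2) (Fin 2) ℂ) := by
  ext i j
  simp only [ptraceLeft, Matrix.of_apply, Matrix.smul_apply, Matrix.one_apply, smul_eq_mul,
    Prod.mk.injEq, Fin.sum_univ_two]
  by_cases h : i = j <;> simp [h] <;> norm_num

lemma logb_two_half : Real.logb 2 (1/2 : ℝ) = -1 := by
  have h2 : Real.log 2 ≠ 0 := ne_of_gt (Real.log_pos one_lt_two)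
  rw [Real.logb, show (1/2 : ℝ) = 2⁻¹ by norm_num, Real.log_inv]
  field_simp

lemma logb_two_quarter : Real.logb 2 (1/4 : ℝ) = -2 := by
  have h2 : Real.log 2 ≠ 0 := ne_of_gt (Real.log_pos one_lt_two)
  rw [Real.logb, show (1/4 : ℝ) = (2^2 : ℝ)⁻¹ by norm_num, Real.log_inv, Real.log_pow]
  field_simp
  norm_num

lemma entropy_half_one : entropy ((1 / 2 : ℂ) • (1 : Matrix (Fin 2) (Fin 2) ℂ)) = 1 := by
  rw [show (1/2 : ℂ) = ((1/2 : ℝ) : ℂ) by norm_num, entropy_real_smul_one, logb_two_half]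
  simp

lemma entropy_quarter_one :
    entropy ((1 / 4 : ℂ) • (1 : Matrix (Fin 2 × Fin 2) (Fin 2 × Fin 2) ℂ)) = 2 := by
  rw [show (1/4 : ℂ) = ((1/4 : ℝ) : ℂ) by norm_num, entropy_real_smul_one, logb_two_quarter]
  simp

lemma cohInfo_depol_bell : cohInfo (lTensor (Fin 2) depol (proj bell)) = -1 := by
  rw [cohInfo, lTensor_depol_proj_bell, ptraceLeft_quarter_one, entropy_half_one,
    entropy_quarter_one]
  norm_num

lemma distortion_depol_bell : distortion bell depol = 3 / 4 := by
  rw [distortion, entFid, lTensor_depol_proj_bell,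
    show (1/4 : ℂ) = ((1/4 : ℝ) : ℂ) by norm_num, quadForm_real_smul_one _ bell_unit]
  norm_num

end Aux2

/-- **Barnum's proposed coherent-information rate-distortion function can be negative:**  the
Bell state purifies the maximally mixed qubit state `π = I/2`; the completely depolarizing
channel `Λ` has output `(id ⊗ Λ)(|Φ⟩⟨Φ|) = I/4`, distortion `3/4`, and coherent information
`−1`; hence the minimum of `I(A⟩B)` over channels with distortion at most `3/4` is at most
`−1 < 0`. -/
theorem barnum_conjecture_fails :
    IsPurification bell ((1 / 2 : ℂ) • (1 : Matrix (Fin 2) (Fin 2) ℂ)) ∧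
    IsCPTP depol ∧
    lTensor (Fin 2) depol (proj bell) =
      (1 / 4 : ℂ) • (1 : Matrix (Fin 2 × Fin 2) (Fin 2 × Fin 2) ℂ) ∧
    distortion bell depol = 3 / 4 ∧
    cohInfo (lTensor (Fin 2) depol (proj bell)) = -1 ∧
    sInf { x | ∃ N : Matrix (Fin 2) (Fin 2) ℂ →ₗ[ℂ] Matrix (Fin 2) (Fin 2) ℂ,
      IsCPTP N ∧ distortion bell N ≤ 3 / 4 ∧
      x = cohInfo (lTensor (Fin 2) N (proj bell)) } ≤ -1 ∧
    (-1 : ℝ) < 0 := by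
  refine ⟨⟨bell_unit, ptraceLeft_proj_bell⟩, depol_cptp, lTensor_depol_proj_bell,
    distortion_depol_bell, cohInfo_depol_bell, ?_, by norm_num⟩
  apply csInf_le
  · refine ⟨-9, fun x hx => ?_⟩
    obtain ⟨N, hN, _, rfl⟩ := hx
    have hω : (lTensor (Fin 2) N (proj bell)).PosSemidef := hN.2 2 (proj bell) (proj_posSemidef bell)
    have htr : (lTensor (Fin 2) N (proj bell)).trace = 1 :=
      (lTensor_trace hN.1 _).trans (proj_trace bell_unit)
    have h1 : 0 ≤ entropy (ptraceLeft (lTensor (Fin 2) N (proj bell))) :=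
      entropy_nonneg (ptraceLeft_posSemidef hω) (by rw [ptraceLeft_trace, htr])
    have h2 : entropy (lTensor (Fin 2) N (proj bell)) ≤ 2 * Fintype.card (Fin 2 × Fin 2) :=
      entropy_le_two_mul_card hω
    norm_num [Fintype.card_prod, Fintype.card_fin] at h2
    rw [cohInfo]
    linarith
  · exact ⟨depol, depol_cptp, le_of_eq distortion_depol_bell, cohInfo_depol_bell.symm⟩


end QIT
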